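/- Let k ≥ 1 and m ≥ 0 be integers, let B ⊆ S, let S' ⊆ S, and let T ⊆ S' with |T| ≤ k. Suppose Z ⊆ S' with |Z| ≤ min(k, m) maximizes Δ(·|B) among all subsets of S' of cardinality at most min(k, m). Then Δ(Z|B) ≥ min(m/k, 1) · Δ(T|B). -/

import Mathlib

open Finset

variable {α : Type*}

/-- `f` is monotone on finsets. -/
def IsMonotoneFn (f : Finset α → ℝ) : Prop := ∀ A B : Finset α, A ⊆ B → f A ≤ f B

/-- `f` is submodular. -/
def IsSubmodularFn [DecidableEq α] (f : Finset α → ℝ) : Prop :=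
  ∀ A B : Finset α, A ⊆ B → ∀ s ∉ B, f (insert s A) - f A ≥ f (insert s B) - f B

/-- Marginal contribution Δ(A|B) = f(A ∪ B) − f(B). -/
def marg [DecidableEq α] (f : Finset α → ℝ) (A B : Finset α) : ℝ := f (A ∪ B) - f B

/-- Δ^l(A|B): best marginal of a subset of `A` of size at most `l`. -/
noncomputable def margSup [DecidableEq α] (f : Finset α → ℝ) (l : ℕ) (A B : Finset α) : ℝ :=
  (A.powerset.filter (fun C => C.card ≤ l)).sup' ⟨∅, by simp⟩ (fun C => marg f C B)

/-- Union of the first `i` sets: x_0 ∪ ⋯ ∪ x_{i-1}. -/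
def pref [DecidableEq α] (x : ℕ → Finset α) (i : ℕ) : Finset α := (Finset.range i).biUnion x

/-- A nominal greedy profile. -/
def NomGreedy [DecidableEq α] (f : Finset α → ℝ) (Ss : ℕ → Finset α) (k n : ℕ)
    (x : ℕ → Finset α) : Prop :=
  ∀ i < n, x i ⊆ Ss i ∧ (x i).card ≤ k ∧
    ∀ c : Finset α, c ⊆ Ss i → c.card ≤ k → f (c ∪ pref x i) ≤ f (x i ∪ pref x i)

/-- An augmented greedy profile. -/
def AugGreedy [DecidableEq α] (f : Finset α → ℝ) (Ss : ℕ → Finset α) (k m n : ℕ)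
    (x z : ℕ → Finset α) : Prop :=
  ∀ i < n,
    (x i ⊆ Ss i ∪ pref z i ∧ (x i).card ≤ k ∧
      ∀ c : Finset α, c ⊆ Ss i ∪ pref z i → c.card ≤ k →
        f (c ∪ pref x i) ≤ f (x i ∪ pref x i)) ∧
    ∃ zk zr : Finset α,
      z i = zk ∪ zr ∧ zk ⊆ Ss i ∧ zk.card ≤ min k m ∧
      (∀ w : Finset α, w ⊆ Ss i → w.card ≤ min k m →
        marg f w (pref x (i + 1)) ≤ marg f zk (pref x (i + 1))) ∧
      zr ⊆ Ss i ∧ zr.card ≤ m - k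

/-- The optimal value OPT(f, (S_i), k) over feasible profiles with n agents. -/
noncomputable def OPTval [DecidableEq α] [Fintype α] (f : Finset α → ℝ) (Ss : ℕ → Finset α)
    (n k : ℕ) : ℝ :=
  ((Finset.univ : Finset (Fin n → Finset α)).filter
      (fun y => ∀ i : Fin n, y i ⊆ Ss (i : ℕ) ∧ (y i).card ≤ k)).sup'
    ⟨(fun _ => ∅), by simp⟩ (fun y => f (Finset.univ.biUnion (fun i => y i)))

lemma marg_nonneg' [DecidableEq α] {f : Finset α → ℝ} (hmono : IsMonotoneFn f)
    (A B : Finset α) : 0 ≤ marg f A B :=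
  sub_nonneg.2 (hmono B (A ∪ B) subset_union_right)

lemma single_anti' [DecidableEq α] {f : Finset α → ℝ} (hmono : IsMonotoneFn f)
    (hsub : IsSubmodularFn f) (t : α) {B B' : Finset α} (h : B ⊆ B') :
    f (insert t B') - f B' ≤ f (insert t B) - f B := by
  by_cases ht : t ∈ B'
  · rw [Finset.insert_eq_self.2 ht]
    simpa using sub_nonneg.2 (hmono B (insert t B) (Finset.subset_insert t B))
  · exact hsub B B' h t ht

lemma subadd' [DecidableEq α] {f : Finset α → ℝ} (hmono : IsMonotoneFn f)
    (hsub : IsSubmodularFn f) (T B : Finset α) :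
    marg f T B ≤ ∑ t ∈ T, (f (insert t B) - f B) := by
  induction T using Finset.induction_on with
  | empty => simp [marg]
  | insert _ _ hnot ih =>
    rename_i t T
    rw [Finset.sum_insert hnot]
    have h1 : marg f (insert t T) B = (f (insert t (T ∪ B)) - f (T ∪ B)) + marg f T B := by
      simp only [marg, Finset.insert_union]; ring
    have h2 : f (insert t (T ∪ B)) - f (T ∪ B) ≤ f (insert t B) - f B :=
      single_anti' hmono hsub t subset_union_right
    linarith

lemma key' [DecidableEq α] {f : Finset α → ℝ} (hmono : IsMonotoneFn f)
    (hsub : IsSubmodularFn f) :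
    ∀ r : ℕ, ∀ T B : Finset α, T.card = r → ∀ m ≤ r,
      ∃ W ⊆ T, W.card ≤ m ∧ (m : ℝ) * marg f T B ≤ (r : ℝ) * marg f W B := by
  intro r
  induction r using Nat.strong_induction_on with
  | _ r ih =>
    intro T B hcard m hm
    rcases Nat.eq_zero_or_pos m with hm0 | hm1
    · refine ⟨∅, Finset.empty_subset T, by simp [hm0], ?_⟩
      simp [hm0, marg]
    · -- m ≥ 1, so r ≥ 1, T nonempty
      have hr1 : 1 ≤ r := le_trans hm1 hm
      have hrR : (0:ℝ) < r := by exact_mod_cast hr1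
      have hTne : T.Nonempty := Finset.card_pos.1 (hcard ▸ hr1)
      have hsum : ∑ t ∈ T, (marg f T B / r) ≤ ∑ t ∈ T, (f (insert t B) - f B) := by
        have h := subadd' hmono hsub T B
        rw [Finset.sum_const, hcard, nsmul_eq_mul, mul_div_cancel₀ _ (ne_of_gt hrR)]
        exact h
      obtain ⟨t, htT, hts⟩ := Finset.exists_le_of_sum_le hTne hsum
      -- apply IH to T \ {t}, insert t B, m - 1
      have hcard' : (T.erase t).card = r - 1 := by
        rw [Finset.card_erase_of_mem htT, hcard]
      have hm' : m - 1 ≤ r - 1 := Nat.sub_le_sub_right hm 1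
      obtain ⟨W', hW'sub, hW'card, hW'⟩ :=
        ih (r - 1) (Nat.sub_lt hr1 one_pos) (T.erase t) (insert t B) hcard' (m - 1) hm'
      refine ⟨insert t W', ?_, ?_, ?_⟩
      · exact Finset.insert_subset htT (hW'sub.trans (Finset.erase_subset t T))
      · have : t ∉ W' := fun h => (Finset.mem_erase.1 (hW'sub h)).1 rfl
        rw [Finset.card_insert_of_notMem this]
        omega
      · -- arithmetic
        have hU1 : T ∪ B = T.erase t ∪ insert t B := by
          ext x
          simp only [Finset.mem_union, Finset.mem_erase, Finset.mem_insert]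
          constructor
          · rintro (hx | hx)
            · by_cases hxt : x = t
              · right; left; exact hxt
              · left; exact ⟨hxt, hx⟩
            · right; right; exact hx
          · rintro (⟨_, hx⟩ | hx | hx)
            · left; exact hx
            · left; exact hx ▸ htT
            · right; exact hx
        have hU2 : insert t W' ∪ B = W' ∪ insert t B := by
          ext x; simp only [Finset.mem_union, Finset.mem_insert]; tauto
        have hTeq : marg f T B = marg f (T.erase t) (insert t B) + (f (insert t B) - f B) := by
          simp only [marg, hU1]; ring
        have hWeq : marg f (insert t W') B
            = marg f W' (insert t B) + (f (insert t B) - f B) := by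
          simp only [marg, hU2]; ring
        have hta : marg f T B ≤ r * (f (insert t B) - f B) := by
          calc marg f T B = r * (marg f T B / r) := by field_simp
          _ ≤ r * (f (insert t B) - f B) :=
            mul_le_mul_of_nonneg_left hts (le_of_lt hrR)
        set a : ℝ := f (insert t B) - f B with ha
        set D' : ℝ := marg f (T.erase t) (insert t B) with hD'
        set w : ℝ := marg f W' (insert t B) with hw
        clear_value a D' w
        have ha0 : 0 ≤ a := ha ▸ sub_nonneg.2 (hmono B (insert t B) (Finset.subset_insert t B))
        have hw0 : 0 ≤ w := hw ▸ marg_nonneg' hmono _ _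
        have hD0 : 0 ≤ D' := hD' ▸ marg_nonneg' hmono _ _
        have hIH : ((m:ℝ) - 1) * D' ≤ ((r:ℝ) - 1) * w := by
          have hrc : ((r - 1 : ℕ) : ℝ) = (r:ℝ) - 1 := by
            push_cast [Nat.cast_sub hr1]; ring
          have hmc : ((m - 1 : ℕ) : ℝ) = (m:ℝ) - 1 := by
            push_cast [Nat.cast_sub hm1]; ring
          rw [← hrc, ← hmc]; exact hW'
        have hmr : (m:ℝ) ≤ (r:ℝ) := by exact_mod_cast hm
        have hm1R : (1:ℝ) ≤ m := by exact_mod_cast hm1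
        rw [hWeq, hTeq]
        have hra : D' + a ≤ r * a := hTeq ▸ hta
        rcases eq_or_lt_of_le hr1 with hr2 | hr2
        · -- r = 1, hence m = 1 and T.erase t = ∅
          have hrm : m = 1 := le_antisymm (hr2 ▸ hm) hm1
          have hE : T.erase t = ∅ := by
            rw [← Finset.card_eq_zero, hcard', ← hr2]
          have hD'0 : D' = 0 := by
            rw [hD', hE]; simp [marg]
          rw [← hr2, hrm, hD'0]
          push_cast
          linarith
        · have hr2R : (0:ℝ) < (r:ℝ) - 1 := by
            have : (2:ℝ) ≤ r := by exact_mod_cast hr2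
            linarith
          have h1 : ((r:ℝ) - m) * (D' + a) ≤ ((r:ℝ) - m) * ((r:ℝ) * a) :=
            mul_le_mul_of_nonneg_left hra (by linarith)
          have h2 : (r:ℝ) * (((m:ℝ) - 1) * D') ≤ (r:ℝ) * (((r:ℝ) - 1) * w) :=
            mul_le_mul_of_nonneg_left hIH hrR.le
          have hgoal' : ((r:ℝ) - 1) * ((m:ℝ) * (D' + a)) ≤ ((r:ℝ) - 1) * ((r:ℝ) * (w + a)) := by
            nlinarith [h1, h2]
          exact le_of_mul_le_mul_left hgoal' hr2R

/-- The best message of size min(k,m) recovers a min(m/k, 1) fraction of the marginal of any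
feasible selection `T` of size at most `k`. -/
theorem stmt6 [DecidableEq α] [Fintype α] (f : Finset α → ℝ)
    (hnorm : f ∅ = 0) (hmono : IsMonotoneFn f) (hsub : IsSubmodularFn f)
    (k m : ℕ) (hk : 1 ≤ k) (B S' T Z : Finset α)
    (hT : T ⊆ S') (hTcard : T.card ≤ k)
    (hZ : Z ⊆ S') (hZcard : Z.card ≤ min k m)
    (hZmax : ∀ W ⊆ S', W.card ≤ min k m → marg f W B ≤ marg f Z B) :
    marg f Z B ≥ min ((m : ℝ) / k) 1 * marg f T B := by
  have hZ0 : 0 ≤ marg f Z B := by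
    have := hZmax ∅ (Finset.empty_subset S') (by simp)
    simpa [marg, hnorm] using this
  set r := T.card with hr
  rcases Nat.eq_zero_or_pos r with hr0 | hr1
  · have hTempty : T = ∅ := Finset.card_eq_zero.1 (by omega)
    have : marg f T B = 0 := by
      rw [hTempty]; simp [marg]
    rw [this, mul_zero]
    exact hZ0
  · set m' := min m r with hm'
    obtain ⟨W, hWT, hWcard, hWkey⟩ := key' hmono hsub r T B rfl m' (min_le_right m r)
    have hWZ : marg f W B ≤ marg f Z B := by
      apply hZmax W (hWT.trans hT)
      have h1 : W.card ≤ m := hWcard.trans (min_le_left m r)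
      have h2 : W.card ≤ k := hWcard.trans ((min_le_right m r).trans hTcard)
      exact le_min h2 h1
    have hrR : (0:ℝ) < r := by exact_mod_cast hr1
    have hkR : (0:ℝ) < k := by exact_mod_cast hk
    have hTB0 : 0 ≤ marg f T B := marg_nonneg' hmono T B
    have hWlb : ((m':ℝ)/r) * marg f T B ≤ marg f W B := by
      rw [div_mul_eq_mul_div, div_le_iff₀ hrR]
      linarith [hWkey]
    have hmin : min ((m:ℝ)/k) 1 ≤ (m':ℝ)/(r:ℝ) := by
      rcases le_total m r with h | h
      · have : m' = m := min_eq_left h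
        rw [this]
        refine (min_le_left _ _).trans ?_
        apply div_le_div_of_nonneg_left (by positivity) hrR
        exact_mod_cast hTcard
      · have : m' = r := min_eq_right h
        rw [this, div_self (ne_of_gt hrR)]
        exact min_le_right _ _
    calc min ((m:ℝ)/k) 1 * marg f T B ≤ ((m':ℝ)/r) * marg f T B :=
          mul_le_mul_of_nonneg_right hmin hTB0
      _ ≤ marg f W B := hWlb
      _ ≤ marg f Z B := hWZ
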